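/- In an e-ring, for projections p,q the following are equivalent: (i) p+q ∈ E; (ii) p+q ≤ 1; (iii) pq = 0; (iv) pq = qp = 0; (v) p+q is a projection. -/
import Mathlib


/-- An e-ring: an associative unital ring `R` together with a set `E` of effects.
`E⁺` is the additive submonoid generated by `E` (the set of finite sums of effects). -/
structure ERing (R : Type*) [Ring R] where
  E : Set R
  zero_mem : (0:R) ∈ E
  one_mem : (1:R) ∈ E
  compl_mem : ∀ e ∈ E, 1 - e ∈ E
  ax_i : ∀ a ∈ AddSubmonoid.closure E, -a ∈ AddSubmonoid.closure E → a = 0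
  ax_ii : ∀ a ∈ AddSubmonoid.closure E, 1 - a ∈ AddSubmonoid.closure E → a ∈ E
  ax_iii : ∀ a ∈ AddSubmonoid.closure E, ∀ b ∈ AddSubmonoid.closure E,
    a * b = b * a → a * b ∈ AddSubmonoid.closure E
  ax_iv : ∀ a ∈ AddSubmonoid.closure E, ∀ b ∈ AddSubmonoid.closure E,
    a * b * a ∈ AddSubmonoid.closure E
  ax_v : ∀ a ∈ AddSubmonoid.closure E, ∀ b ∈ AddSubmonoid.closure E,
    a * b * a = 0 → a * b = 0 ∧ b * a = 0
  ax_vi : ∀ a ∈ AddSubmonoid.closure E, ∀ b ∈ AddSubmonoid.closure E,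
    (a - b) * (a - b) ∈ AddSubmonoid.closure E

namespace ERing

variable {R : Type*} [Ring R]

/-- The positive cone `E⁺`: all finite sums of effects. -/
def Ep (S : ERing R) : Set R := (AddSubmonoid.closure S.E : Set R)

/-- The directed group `G = E⁺ − E⁺` (as a subset of `R`). -/
def G (S : ERing R) : Set R := {x | ∃ a ∈ S.Ep, ∃ b ∈ S.Ep, x = a - b}

/-- The partial order with positive cone `E⁺`: `g ≤ h` iff `h − g ∈ E⁺`. -/
def le (S : ERing R) (g h : R) : Prop := h - g ∈ S.Ep

/-- The set of projections: idempotent elements of `G`. -/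
def P (S : ERing R) : Set R := {p | p ∈ S.G ∧ p * p = p}

end ERing

lemma proj_mem_Ep {R : Type*} [Ring R] (S : ERing R) {p : R} (hp : p ∈ S.P) :
    p ∈ AddSubmonoid.closure S.E := by
  obtain ⟨⟨a, ha, b, hb, hab⟩, hpp⟩ := hp
  have := S.ax_vi a ha b hb
  rw [← hab, hpp] at this
  exact this

lemma proj_compl_mem {R : Type*} [Ring R] (S : ERing R) {p : R} (hp : p ∈ S.P) :
    1 - p ∈ AddSubmonoid.closure S.E := by
  have h1 : (1:R) ∈ AddSubmonoid.closure S.E := AddSubmonoid.subset_closure S.one_mem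
  have := S.ax_vi 1 h1 p (proj_mem_Ep S hp)
  have heq : (1 - p) * (1 - p) = 1 - p := by
    simp only [mul_sub, sub_mul, one_mul, mul_one, hp.2]
    abel
  rwa [heq] at this

theorem stmt10 {R : Type*} [Ring R] (S : ERing R) :
    ∀ p ∈ S.P, ∀ q ∈ S.P,
      List.TFAE [p + q ∈ S.E, S.le (p + q) 1, p * q = 0, p * q = 0 ∧ q * p = 0,
        p + q ∈ S.P] := by
  intro p hp q hq
  have hpE := proj_mem_Ep S hp
  have hqE := proj_mem_Ep S hq
  tfae_have 1 → 2 := by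
    intro h
    exact AddSubmonoid.subset_closure (S.compl_mem _ h)
  tfae_have 2 → 3 := by
    intro h
    have h1 : p * (1 - (p + q)) * p ∈ AddSubmonoid.closure S.E := S.ax_iv p hpE _ h
    have h2 : p * q * p ∈ AddSubmonoid.closure S.E := S.ax_iv p hpE q hqE
    have heq : p * (1 - (p + q)) * p = -(p * q * p) := by
      have hpp := hp.2
      simp only [mul_sub, sub_mul, mul_add, add_mul, mul_one, one_mul, mul_assoc]
      simp only [← mul_assoc, hpp]
      abel
    rw [heq] at h1
    have := S.ax_i _ h2 h1
    exact (S.ax_v p hpE q hqE this).1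
  tfae_have 3 → 4 := by
    intro h
    have : p * q * p = 0 := by rw [h, zero_mul]
    exact S.ax_v p hpE q hqE this
  tfae_have 4 → 5 := by
    rintro ⟨h1, h2⟩
    refine ⟨⟨p + q, AddSubmonoid.add_mem _ hpE hqE, 0, AddSubmonoid.zero_mem _, by rw [sub_zero]⟩, ?_⟩
    have hpp := hp.2
    have hqq := hq.2
    have : (p + q) * (p + q) = p * p + p * q + q * p + q * q := by
      simp only [add_mul, mul_add]; abel
    rw [this, hpp, hqq, h1, h2]; abel
  tfae_have 5 → 1 := by
    intro h
    exact S.ax_ii _ (proj_mem_Ep S h) (proj_compl_mem S h)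
  tfae_finish
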